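/- arXiv:2310.19604 — 4 statements merged into one kernel-verified Lean document; each statement's English description precedes it below -/
import Mathlib

section
/- Let V(x₁, x₂, s) = (1/δ₁)·log(x₁) − ((λ+α₂)/(δ₂(λ+α₁)))·log(x₂). Then along any solution of the predator-prey system x₁' = δ₁((s−λ)/(s+α₁))x₁, x₂' = δ₂((s−λ)/(s+α₂))x₂, s' = s(1−s) − s·x₁/(s+α₁) − s·x₂/(s+α₂) with x₁, x₂, s > 0, the time derivative of V equals (α₁−α₂)(s−λ)² / ((λ+α₁)(s+α₁)(s+α₂)). -/
theorem stmt_4 (δ₁ δ₂ α₁ α₂ lam : ℝ)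
    (hδ₁ : 0 < δ₁) (hδ₂ : 0 < δ₂) (hα₁ : 0 < α₁) (hα₂ : 0 < α₂) (hlam : 0 < lam)
    (x₁ x₂ s : ℝ → ℝ)
    (hpos : ∀ t, 0 < x₁ t ∧ 0 < x₂ t ∧ 0 < s t)
    (hx₁ : ∀ t, HasDerivAt x₁ (δ₁ * ((s t - lam) / (s t + α₁)) * x₁ t) t)
    (hx₂ : ∀ t, HasDerivAt x₂ (δ₂ * ((s t - lam) / (s t + α₂)) * x₂ t) t)
    (hs : ∀ t, HasDerivAt s
      (s t * (1 - s t) - s t / (s t + α₁) * x₁ t - s t / (s t + α₂) * x₂ t) t) :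
    ∀ t, HasDerivAt
      (fun t => (1 / δ₁) * Real.log (x₁ t) - ((lam + α₂) / (δ₂ * (lam + α₁))) * Real.log (x₂ t))
      ((α₁ - α₂) * (s t - lam)^2 / ((lam + α₁) * (s t + α₁) * (s t + α₂))) t := by
  intro t
  obtain ⟨h1, h2, h3⟩ := hpos t
  have d1 := ((hx₁ t).log h1.ne').const_mul (1 / δ₁)
  have d2 := ((hx₂ t).log h2.ne').const_mul ((lam + α₂) / (δ₂ * (lam + α₁)))
  have := d1.sub d2
  convert this using 1
  have hA : s t + α₁ ≠ 0 := by positivity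
  have hB : s t + α₂ ≠ 0 := by positivity
  have hL : lam + α₁ ≠ 0 := by positivity
  have hX1 : x₁ t ≠ 0 := h1.ne'
  have hX2 : x₂ t ≠ 0 := h2.ne'
  have hD1 : δ₁ ≠ 0 := hδ₁.ne'
  have hD2 : δ₂ ≠ 0 := hδ₂.ne'
  · rfl
  · rfl
  · rfl
  field_simp
  ring
end

section
/- Along any positive solution of the predator-prey system with λ₁ = λ₂ = λ and α₁ < α₂, the function V(x₁, x₂, s) = (1/δ₁)log(x₁) − ((λ+α₂)/(δ₂(λ+α₁)))log(x₂) is nonincreasing in time; i.e., its time derivative is ≤ 0 everywhere on the positive octant. -/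
theorem stmt_5 (δ₁ δ₂ α₁ α₂ lam : ℝ)
    (hδ₁ : 0 < δ₁) (hδ₂ : 0 < δ₂) (hα : 0 < α₁) (hαα : α₁ < α₂) (hlam : 0 < lam)
    (x₁ x₂ s : ℝ → ℝ)
    (hpos : ∀ t, 0 < x₁ t ∧ 0 < x₂ t ∧ 0 < s t)
    (hx₁ : ∀ t, HasDerivAt x₁ (δ₁ * ((s t - lam) / (s t + α₁)) * x₁ t) t)
    (hx₂ : ∀ t, HasDerivAt x₂ (δ₂ * ((s t - lam) / (s t + α₂)) * x₂ t) t)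
    (hs : ∀ t, HasDerivAt s
      (s t * (1 - s t) - s t / (s t + α₁) * x₁ t - s t / (s t + α₂) * x₂ t) t) :
    ∀ t, deriv
      (fun t => (1 / δ₁) * Real.log (x₁ t) - ((lam + α₂) / (δ₂ * (lam + α₁))) * Real.log (x₂ t))
      t ≤ 0 := by
  intro t
  obtain ⟨h1, h2, h3⟩ := hpos t
  have hA1 : 0 < s t + α₁ := by linarith
  have hA2 : 0 < s t + α₂ := by linarith
  have hL1 : 0 < lam + α₁ := by linarith
  have hd : HasDerivAt
      (fun t => (1 / δ₁) * Real.log (x₁ t) - ((lam + α₂) / (δ₂ * (lam + α₁))) * Real.log (x₂ t))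
      ((1 / δ₁) * (δ₁ * ((s t - lam) / (s t + α₁)) * x₁ t / x₁ t)
        - ((lam + α₂) / (δ₂ * (lam + α₁))) * (δ₂ * ((s t - lam) / (s t + α₂)) * x₂ t / x₂ t)) t := by
    exact (((hx₁ t).log h1.ne').const_mul _).sub (((hx₂ t).log h2.ne').const_mul _)
  rw [hd.deriv]
  rw [mul_div_assoc, div_self h1.ne', mul_div_assoc, div_self h2.ne']
  have key : (1 / δ₁) * (δ₁ * ((s t - lam) / (s t + α₁)) * 1)
      - ((lam + α₂) / (δ₂ * (lam + α₁))) * (δ₂ * ((s t - lam) / (s t + α₂)) * 1)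
      = (α₁ - α₂) * (s t - lam) ^ 2 / ((lam + α₁) * (s t + α₁) * (s t + α₂)) := by
    field_simp
    ring
  rw [key]
  apply div_nonpos_of_nonpos_of_nonneg
  · nlinarith [sq_nonneg (s t - lam)]
  · positivity
end

section
/- Define H₂(λ, α₁, α₂) = λ − 2α₁ + 8λα₁ − λα₂ + 2α₁α₂ + 2α₁². If 0 < λ < 1/2, 0 < α₁ < 1−2λ, and 1−2λ < α₂ < 1, then H₂(λ, α₁, α₂) > 0. -/
theorem stmt_13 (lam α₁ α₂ : ℝ)
    (hlam : 0 < lam) (hlam' : lam < 1/2)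
    (hα₁ : 0 < α₁) (hα₁' : α₁ < 1 - 2*lam)
    (hα₂ : 1 - 2*lam < α₂) (hα₂' : α₂ < 1) :
    0 < lam - 2*α₁ + 8*lam*α₁ - lam*α₂ + 2*α₁*α₂ + 2*α₁^2 := by
  nlinarith [sq_nonneg (lam + α₁), mul_pos hlam hα₁, sq_nonneg α₁, mul_pos (sub_pos.2 hα₂) (sub_pos.2 hα₂')]
end

section
/- Under the admissible constraints 0 < λ < 1/2, 0 < α₁ < 1−2λ, 1−2λ < α₂ < 1, and δ₁, δ₂ > 0, with ℓ₁ = 1−2λ−α₁ and ℓ₂ = 2λ+α₂−1, the inequality (λ+α₁)δ₁ℓ₂H₁(λ,α₁,α₂) − (λ+α₂)δ₂ℓ₁H₂(λ,α₁,α₂) < 0 holds, where H₁ = −λ+2α₂+λα₁−8λα₂−2α₁α₂−2α₂² and H₂ = λ−2α₁+8λα₁−λα₂+2α₁α₂+2α₁². -/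
theorem stmt_15 (δ₁ δ₂ lam α₁ α₂ : ℝ)
    (hδ₁ : 0 < δ₁) (hδ₂ : 0 < δ₂)
    (hlam : 0 < lam) (hlam' : lam < 1/2)
    (hα₁ : 0 < α₁) (hα₁' : α₁ < 1 - 2*lam)
    (hα₂ : 1 - 2*lam < α₂) (hα₂' : α₂ < 1) :
    (lam + α₁) * δ₁ * (2*lam + α₂ - 1) *
      (-lam + 2*α₂ + lam*α₁ - 8*lam*α₂ - 2*α₁*α₂ - 2*α₂^2)
    - (lam + α₂) * δ₂ * (1 - 2*lam - α₁) *
      (lam - 2*α₁ + 8*lam*α₁ - lam*α₂ + 2*α₁*α₂ + 2*α₁^2) < 0 := by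
  have h1 : (-lam + 2*α₂ + lam*α₁ - 8*lam*α₂ - 2*α₁*α₂ - 2*α₂^2) < 0 := by nlinarith
  have h2 : (lam - 2*α₁ + 8*lam*α₁ - lam*α₂ + 2*α₁*α₂ + 2*α₁^2) > 0 := by nlinarith
  have c1 : 0 < (lam + α₁) * δ₁ * (2*lam + α₂ - 1) := by
    have : 0 < 2*lam + α₂ - 1 := by linarith
    have : 0 < lam + α₁ := by linarith
    positivity
  have c2 : 0 < (lam + α₂) * δ₂ * (1 - 2*lam - α₁) := by
    have : 0 < 1 - 2*lam - α₁ := by linarith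
    have : 0 < lam + α₂ := by linarith
    positivity
  nlinarith [mul_neg_of_pos_of_neg c1 h1, mul_pos c2 h2]
end
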